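/- There exists an absolute constant c such that for every positive integer r and every integer N ≥ 2^(2^(c·r)), any r-colouring of the grid [N]^2 = {1,...,N} × {1,...,N} contains a monochromatic corner: points (x, y), (x + d, y), (x, y + d) with d ≥ 1, all lying in [N]^2 and all receiving the same colour. -/

import Mathlib

open Finset

/-- Popular difference lemma: for `A ⊆ [1, L]` there is a positive shift `s` such that
many elements `a ∈ A` also have `a + s ∈ A`. -/
lemma corners_popular_diff {L : ℕ} (A : Finset ℕ) (hA : A ⊆ Finset.Icc 1 L) (hL : 1 ≤ L) :
    ∃ s, 1 ≤ s ∧ A.card * A.card - A.card ≤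
      2 * (L * (A.filter (fun a => a + s ∈ A)).card) := by
  classical
  set g : ℕ → ℕ := fun s => (A.filter (fun a => a + s ∈ A)).card with hg
  set P : Finset (ℕ × ℕ) := A.offDiag.filter (fun p => p.1 < p.2) with hP
  have h1 : A.offDiag.card ≤ 2 * P.card := by
    have hsub : A.offDiag ⊆ P ∪ P.image Prod.swap := by
      intro p hp
      obtain ⟨ha1, ha2, hne⟩ := Finset.mem_offDiag.mp hp
      rcases lt_or_gt_of_ne hne with h | h
      · exact Finset.mem_union_left _ (Finset.mem_filter.mpr ⟨hp, h⟩)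
      · refine Finset.mem_union_right _ (Finset.mem_image.mpr ⟨⟨p.2, p.1⟩, ?_, rfl⟩)
        exact Finset.mem_filter.mpr ⟨Finset.mem_offDiag.mpr ⟨ha2, ha1, hne.symm⟩, h⟩
    calc A.offDiag.card ≤ (P ∪ P.image Prod.swap).card := Finset.card_le_card hsub
      _ ≤ P.card + (P.image Prod.swap).card := Finset.card_union_le _ _
      _ ≤ P.card + P.card := by
          have := Finset.card_image_le (s := P) (f := Prod.swap)
          omega
      _ = 2 * P.card := by ring
  have h2 : P.card ≤ ∑ s ∈ Finset.Icc 1 L, g s := by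
    rw [← Finset.card_sigma]
    apply Finset.card_le_card_of_injOn
      (fun p => (⟨p.2 - p.1, p.1⟩ : (_ : ℕ) × ℕ))
    · intro p hp
      obtain ⟨hpd, hlt⟩ := Finset.mem_filter.mp hp
      obtain ⟨ha1, ha2, _⟩ := Finset.mem_offDiag.mp hpd
      have hb1 := Finset.mem_Icc.mp (hA ha1)
      have hb2 := Finset.mem_Icc.mp (hA ha2)
      have hm1 : p.2 - p.1 ∈ Finset.Icc 1 L := Finset.mem_Icc.mpr ⟨by omega, by omega⟩
      have hm2 : p.1 ∈ A.filter (fun a => a + (p.2 - p.1) ∈ A) := by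
        refine Finset.mem_filter.mpr ⟨ha1, ?_⟩
        have he : p.1 + (p.2 - p.1) = p.2 := by omega
        rw [he]; exact ha2
      exact Finset.mem_sigma.mpr ⟨hm1, hm2⟩
    · intro p hp q hq hpq
      have hp' := Finset.mem_filter.mp hp
      have hq' := Finset.mem_filter.mp hq
      have h1 : p.1 < p.2 := hp'.2
      have h2 : q.1 < q.2 := hq'.2
      have e1 : p.2 - p.1 = q.2 - q.1 := congrArg (fun x : (_ : ℕ) × ℕ => x.1) hpq
      have e2 : p.1 = q.1 := congrArg (fun x : (_ : ℕ) × ℕ => x.2) hpq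
      have e3 : p.2 = q.2 := by omega
      exact Prod.ext e2 e3
  obtain ⟨s, hs, hmax⟩ := Finset.exists_max_image (Finset.Icc 1 L) g ⟨1, by simp [hL]⟩
  have h3 : ∑ s' ∈ Finset.Icc 1 L, g s' ≤ L * g s := by
    calc ∑ s' ∈ Finset.Icc 1 L, g s' ≤ ∑ _s' ∈ Finset.Icc 1 L, g s :=
          Finset.sum_le_sum fun i hi => hmax i hi
      _ = (Finset.Icc 1 L).card * g s := by rw [Finset.sum_const, smul_eq_mul]
      _ = L * g s := by rw [Nat.card_Icc, Nat.add_sub_cancel]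
  have hcard : A.offDiag.card = A.card * A.card - A.card := Finset.offDiag_card A
  refine ⟨s, (Finset.mem_Icc.mp hs).1, ?_⟩
  calc A.card * A.card - A.card = A.offDiag.card := hcard.symm
    _ ≤ 2 * P.card := h1
    _ ≤ 2 * ∑ s' ∈ Finset.Icc 1 L, g s' := by omega
    _ ≤ 2 * (L * g s) := by omega

/-- Main inductive lemma: an "index-corner" theorem for colourings of pairs of
elements of a dense subset `A` of `[1, L]`. -/
lemma corners_index {R : ℕ} :
    ∀ j : ℕ, ∀ L : ℕ, 1 ≤ L → ∀ (A : Finset ℕ) (ξ : ℕ → ℕ → Fin R) (C : Finset (Fin R)),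
      A ⊆ Finset.Icc 1 L → C.card ≤ j →
      (∀ a b : ℕ, a ∈ A → b ∈ A → a < b → ξ a b ∈ C) →
      (4 * R * L) ^ (2 ^ j - 1) * 2 ^ 2 ^ j ≤ A.card ^ 2 ^ j →
      ∃ a b d : ℕ, 1 ≤ d ∧ d < b ∧ a ∈ A ∧ a + d ∈ A ∧ b - d ∈ A ∧ b ∈ A ∧
        ξ a b = ξ (a + d) b ∧ ξ a b = ξ a (b - d) := by
  intro j
  induction j with
  | zero =>
    intro L hL A ξ C hA hC Hcol hcard
    norm_num at hcard
    have h2 : 2 ≤ A.card := hcard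
    obtain ⟨a, ha, b, hb, hne⟩ := Finset.one_lt_card.mp h2
    have hCe : C = ∅ := Finset.card_eq_zero.mp (Nat.le_zero.mp hC)
    rcases lt_or_gt_of_ne hne with h | h
    · have := Hcol a b ha hb h
      simp [hCe] at this
    · have := Hcol b a hb ha h
      simp [hCe] at this
  | succ j ih =>
    intro L hL A ξ C hA hC Hcol hcard
    classical
    rcases Nat.eq_zero_or_pos R with hR0 | hR1
    · subst hR0; exact (ξ 0 0).elim0
    set n := A.card with hn
    set K := 4 * R * L with hK
    have hKpos : 0 < K := by positivity
    have hexppos : 0 < 2 ^ j := Nat.pow_pos (by norm_num)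
    -- n ≥ 2
    have h2n : 2 ≤ n := by
      by_contra h
      push_neg at h
      have hn1 : n ≤ 1 := by omega
      have h1 : n ^ 2 ^ (j + 1) ≤ 1 := by
        calc n ^ 2 ^ (j + 1) ≤ 1 ^ 2 ^ (j + 1) := Nat.pow_le_pow_left hn1 _
          _ = 1 := one_pow _
      have h2 : 2 ^ 2 ^ (j + 1) ≤ n ^ 2 ^ (j + 1) := by
        have hK1 : 1 ≤ K ^ (2 ^ (j + 1) - 1) := Nat.one_le_pow _ _ hKpos
        calc 2 ^ 2 ^ (j + 1) = 1 * 2 ^ 2 ^ (j + 1) := (one_mul _).symm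
          _ ≤ K ^ (2 ^ (j + 1) - 1) * 2 ^ 2 ^ (j + 1) := Nat.mul_le_mul_right _ hK1
          _ ≤ n ^ 2 ^ (j + 1) := hcard
      have h3 : 2 ≤ 2 ^ 2 ^ (j + 1) := by
        calc 2 = 2 ^ 1 := (pow_one 2).symm
          _ ≤ 2 ^ 2 ^ (j + 1) := Nat.pow_le_pow_right (by norm_num)
              (Nat.one_le_pow _ _ (by norm_num))
      omega
    -- popular difference
    obtain ⟨s, hs1, hsbig⟩ := corners_popular_diff A hA hL
    set A' := A.filter (fun a => a + s ∈ A) with hA'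
    have hA'sub : A' ⊆ A := Finset.filter_subset _ _
    have hA'mem : ∀ u ∈ A', u ∈ A ∧ u + s ∈ A := fun u hu =>
      ⟨hA'sub hu, (Finset.mem_filter.mp hu).2⟩
    -- C nonempty
    rcases Finset.eq_empty_or_nonempty C with hCe | hCne
    · obtain ⟨a, ha, b, hb, hne⟩ := Finset.one_lt_card.mp h2n
      rcases lt_or_gt_of_ne hne with h | h
      · have := Hcol a b ha hb h
        simp [hCe] at this
      · have := Hcol b a hb ha h
        simp [hCe] at this
    -- majority colour on the diagonal of A'
    have hfiber : A'.card = ∑ c ∈ C, (A'.filter (fun u => ξ u (u + s) = c)).card := by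
      apply Finset.card_eq_sum_card_fiberwise
      intro u hu
      obtain ⟨h1, h2⟩ := hA'mem u hu
      exact Hcol u (u + s) h1 h2 (by omega)
    have hsum : ∑ _c ∈ C, A'.card ≤
        ∑ c ∈ C, C.card * (A'.filter (fun u => ξ u (u + s) = c)).card := by
      rw [← Finset.mul_sum, ← hfiber, Finset.sum_const, smul_eq_mul]
    obtain ⟨c, hcC, hc⟩ := Finset.exists_le_of_sum_le hCne hsum
    set A'' := A'.filter (fun u => ξ u (u + s) = c) with hA''def
    have hA''sub' : A'' ⊆ A' := Finset.filter_subset _ _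
    have hA''mem : ∀ u ∈ A'', u ∈ A ∧ u + s ∈ A ∧ ξ u (u + s) = c := fun u hu =>
      ⟨(hA'mem u (hA''sub' hu)).1, (hA'mem u (hA''sub' hu)).2,
        (Finset.mem_filter.mp hu).2⟩
    have hCR : C.card ≤ R := by
      have h1 : C.card ≤ (Finset.univ : Finset (Fin R)).card := Finset.card_le_univ C
      simpa using h1
    -- size bound: n * n ≤ K * A''.card
    have hsize0 : n * n ≤ K * A''.card := by
      have e1 : 2 * n ≤ n * n := Nat.mul_le_mul_right n h2n
      have e4 : A'.card ≤ R * A''.card := le_trans hc (Nat.mul_le_mul_right _ hCR)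
      have e5 : 2 * (L * A'.card) ≤ 2 * (L * (R * A''.card)) := by
        have := Nat.mul_le_mul_left L e4
        omega
      have e6 : 2 * (2 * (L * (R * A''.card))) = K * A''.card := by rw [hK]; ring
      have e7 : n * n - n ≤ 2 * (L * A'.card) := hsbig
      omega
    -- case split: is some apex coloured c?
    by_cases hap : ∃ u ∈ A'', ∃ w ∈ A'', u < w ∧ ξ u (w + s) = c
    · obtain ⟨u, hu, w, hw, huw, hcol⟩ := hap
      obtain ⟨huA, husA, hud⟩ := hA''mem u hu
      obtain ⟨hwA, hwsA, hwd⟩ := hA''mem w hw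
      refine ⟨u, w + s, w - u, by omega, by omega, huA, ?_, ?_, hwsA, ?_, ?_⟩
      · have e : u + (w - u) = w := by omega
        rw [e]; exact hwA
      · have e : w + s - (w - u) = u + s := by omega
        rw [e]; exact husA
      · have e : u + (w - u) = w := by omega
        rw [e, hcol, hwd]
      · have e : w + s - (w - u) = u + s := by omega
        rw [e, hcol, hud]
    · push_neg at hap
      -- recurse with colour c removed
      set ξ' : ℕ → ℕ → Fin R := fun u w => ξ u (w + s) with hξ'
      have Hcol' : ∀ a b : ℕ, a ∈ A'' → b ∈ A'' → a < b → ξ' a b ∈ C.erase c := by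
        intro a b ha hb hab
        obtain ⟨haA, hasA, _⟩ := hA''mem a ha
        obtain ⟨hbA, hbsA, _⟩ := hA''mem b hb
        refine Finset.mem_erase.mpr ⟨hap a ha b hb hab, ?_⟩
        exact Hcol a (b + s) haA hbsA (by omega)
      have hCc : (C.erase c).card ≤ j := by
        have := Finset.card_erase_of_mem hcC
        omega
      have hsize : K ^ (2 ^ j - 1) * 2 ^ 2 ^ j ≤ A''.card ^ 2 ^ j := by
        set m := A''.card with hm
        have hmain : K ^ 2 ^ j * (K ^ (2 ^ j - 1) * 2 ^ 2 ^ j) ≤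
            K ^ 2 ^ j * m ^ 2 ^ j := by
          have e1 : K ^ 2 ^ j * (K ^ (2 ^ j - 1) * 2 ^ 2 ^ j) =
              K ^ (2 ^ (j + 1) - 1) * 2 ^ 2 ^ j := by
            rw [← mul_assoc, ← pow_add]
            congr 2
            have h2j : 2 ^ (j + 1) = 2 ^ j + 2 ^ j := by ring
            omega
          have e2 : K ^ (2 ^ (j + 1) - 1) * 2 ^ 2 ^ j ≤
              K ^ (2 ^ (j + 1) - 1) * 2 ^ 2 ^ (j + 1) := by
            apply Nat.mul_le_mul_left
            exact Nat.pow_le_pow_right (by norm_num)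
              (Nat.pow_le_pow_right (by norm_num) (by omega))
          have e3 : n ^ 2 ^ (j + 1) = (n * n) ^ 2 ^ j := by
            rw [← pow_two, ← pow_mul]
            congr 1
            ring
          have e4 : (n * n) ^ 2 ^ j ≤ (K * m) ^ 2 ^ j := Nat.pow_le_pow_left hsize0 _
          have e5 : (K * m) ^ 2 ^ j = K ^ 2 ^ j * m ^ 2 ^ j := mul_pow _ _ _
          calc K ^ 2 ^ j * (K ^ (2 ^ j - 1) * 2 ^ 2 ^ j)
              = K ^ (2 ^ (j + 1) - 1) * 2 ^ 2 ^ j := e1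
            _ ≤ K ^ (2 ^ (j + 1) - 1) * 2 ^ 2 ^ (j + 1) := e2
            _ ≤ n ^ 2 ^ (j + 1) := hcard
            _ = (n * n) ^ 2 ^ j := e3
            _ ≤ (K * m) ^ 2 ^ j := e4
            _ = K ^ 2 ^ j * m ^ 2 ^ j := e5
        exact Nat.le_of_mul_le_mul_left hmain (Nat.pow_pos hKpos)
      have hA''subA : A'' ⊆ A := fun u hu => (hA''mem u hu).1
      obtain ⟨a, b, d, hd1, hdb, haA, hadA, hbdA, hbA, he1, he2⟩ :=
        ih L hL A'' ξ' (C.erase c) (le_trans hA''subA hA) hCc Hcol' hsize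
      obtain ⟨haA0, hasA0, _⟩ := hA''mem a haA
      obtain ⟨hadA0, hadsA0, _⟩ := hA''mem (a + d) hadA
      obtain ⟨hbdA0, hbdsA0, _⟩ := hA''mem (b - d) hbdA
      obtain ⟨hbA0, hbsA0, _⟩ := hA''mem b hbA
      refine ⟨a, b + s, d, hd1, by omega, haA0, hadA0, ?_, hbsA0, ?_, ?_⟩
      · have e : b + s - d = b - d + s := by omega
        rw [e]; exact hbdsA0
      · exact he1
      · have e : b + s - d = b - d + s := by omega
        rw [e]; exact he2

lemma corners_aux_numeric (r : ℕ) (hr : 1 ≤ r) :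
    (4 * r) ^ (2 ^ r - 1) * 2 ^ 2 ^ r ≤ 2 ^ 2 ^ (3 * r) := by
  have h1 : 4 * r ≤ 2 ^ (r + 2) := by
    have := Nat.lt_two_pow_self (n := r)
    calc 4 * r ≤ 4 * 2 ^ r := by omega
      _ = 2 ^ (r + 2) := by rw [pow_add]; ring
  have h2 : (4 * r) ^ (2 ^ r - 1) ≤ 2 ^ ((r + 2) * (2 ^ r - 1)) := by
    calc (4 * r) ^ (2 ^ r - 1) ≤ (2 ^ (r + 2)) ^ (2 ^ r - 1) := Nat.pow_le_pow_left h1 _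
      _ = 2 ^ ((r + 2) * (2 ^ r - 1)) := by rw [← pow_mul]
  have h3 : (4 * r) ^ (2 ^ r - 1) * 2 ^ 2 ^ r ≤ 2 ^ ((r + 2) * (2 ^ r - 1) + 2 ^ r) := by
    rw [pow_add]
    exact Nat.mul_le_mul_right _ h2
  have h4 : (r + 2) * (2 ^ r - 1) + 2 ^ r ≤ 2 ^ (3 * r) := by
    have hr4 : r + 3 ≤ 4 ^ r := by
      clear h1 h2 h3
      induction r with
      | zero => omega
      | succ k ihk =>
        rcases Nat.eq_zero_or_pos k with h | h
        · subst h; norm_num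
        · have := ihk h
          have h4k : 4 ^ (k + 1) = 4 * 4 ^ k := by ring
          omega
    have hpos : 0 < 2 ^ r := Nat.pow_pos (by norm_num)
    have key : (r + 2) * (2 ^ r - 1) + 2 ^ r ≤ (r + 3) * 2 ^ r := by
      have h5 : (r + 2) * (2 ^ r - 1) ≤ (r + 2) * 2 ^ r := Nat.mul_le_mul_left _ (by omega)
      have h6 : (r + 3) * 2 ^ r = (r + 2) * 2 ^ r + 2 ^ r := by ring
      omega
    have e : 2 ^ (3 * r) = 4 ^ r * 2 ^ r := by
      rw [show (3 : ℕ) * r = 2 * r + r by ring, pow_add, pow_mul]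
      norm_num
    calc (r + 2) * (2 ^ r - 1) + 2 ^ r ≤ (r + 3) * 2 ^ r := key
      _ ≤ 4 ^ r * 2 ^ r := Nat.mul_le_mul_right _ hr4
      _ = 2 ^ (3 * r) := e.symm
  calc (4 * r) ^ (2 ^ r - 1) * 2 ^ 2 ^ r ≤ 2 ^ ((r + 2) * (2 ^ r - 1) + 2 ^ r) := h3
    _ ≤ 2 ^ 2 ^ (3 * r) := Nat.pow_le_pow_right (by norm_num) h4

/-- coloured corners theorem, with doubly exponential bound.
There is an absolute constant `c` such that for every positive integer `r` and every
`N ≥ 2^(2^(c·r))`, any `r`-colouring of the grid `[N]² = {1,…,N} × {1,…,N}` contains a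
monochromatic corner: points `(x, y)`, `(x + d, y)`, `(x, y + d)` with `d ≥ 1`, all lying
in `[N]²` and all receiving the same colour. -/
theorem corners_doubly_exponential :
    ∃ c : ℕ, 0 < c ∧ ∀ r : ℕ, 0 < r → ∀ N : ℕ, 2 ^ 2 ^ (c * r) ≤ N →
      ∀ χ : ℕ → ℕ → Fin r,
        ∃ x y d : ℕ, 1 ≤ x ∧ 1 ≤ y ∧ 1 ≤ d ∧ x + d ≤ N ∧ y + d ≤ N ∧
          χ x y = χ (x + d) y ∧ χ x y = χ x (y + d) := by
  refine ⟨3, by norm_num, ?_⟩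
  intro r hr N hN χ
  have hN1 : 1 ≤ N := by
    have : 1 ≤ 2 ^ 2 ^ (3 * r) := Nat.one_le_pow _ _ (by norm_num)
    omega
  set ξ : ℕ → ℕ → Fin r := fun a b => χ a (N + 1 - b) with hξ
  have hcardIcc : (Finset.Icc 1 N).card = N := by
    rw [Nat.card_Icc, Nat.add_sub_cancel]
  have hsize : (4 * r * N) ^ (2 ^ r - 1) * 2 ^ 2 ^ r ≤ (Finset.Icc 1 N).card ^ 2 ^ r := by
    rw [hcardIcc]
    have h1 : (4 * r) ^ (2 ^ r - 1) * 2 ^ 2 ^ r ≤ N :=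
      le_trans (corners_aux_numeric r hr) hN
    calc (4 * r * N) ^ (2 ^ r - 1) * 2 ^ 2 ^ r
        = N ^ (2 ^ r - 1) * ((4 * r) ^ (2 ^ r - 1) * 2 ^ 2 ^ r) := by
          rw [mul_pow]; ring
      _ ≤ N ^ (2 ^ r - 1) * N := Nat.mul_le_mul_left _ h1
      _ = N ^ (2 ^ r - 1 + 1) := by rw [pow_succ]
      _ = N ^ 2 ^ r := by
          congr 1
          have : 0 < 2 ^ r := Nat.pow_pos (by norm_num)
          omega
  obtain ⟨a, b, d, hd1, hdb, haA, hadA, hbdA, hbA, he1, he2⟩ :=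
    corners_index r N hN1 (Finset.Icc 1 N) ξ Finset.univ (le_refl _)
      (by simp) (fun a b _ _ _ => Finset.mem_univ _) hsize
  have ha := Finset.mem_Icc.mp haA
  have had := Finset.mem_Icc.mp hadA
  have hbd := Finset.mem_Icc.mp hbdA
  have hb := Finset.mem_Icc.mp hbA
  refine ⟨a, N + 1 - b, d, by omega, by omega, by omega, by omega, by omega, ?_, ?_⟩
  · exact he1
  · have e : N + 1 - b + d = N + 1 - (b - d) := by omega
    rw [e]
    exact he2
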